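/- (Miscoordination example; PoA_0 ≥ 2 for the English Walrasian mechanism.) Let n = 2 agents and m = 2 items A and B, and fix 0 < ε < 1. Define unit-demand valuations v_1(S) = max_{j∈S} w^1_j with w^1_A = 2−ε, w^1_B = 1, and v_2(S) = max_{j∈S} w^2_j with w^2_A = 1, w^2_B = 2−ε. Define bids b_1(S) = 1 if B ∈ S else 0, and b_2(S) = 1 if A ∈ S else 0. Then for every English Walrasian mechanism with bid space equal to the GS valuations, the profile (b_1, b_2) is a pure Nash equilibrium for (v_1, v_2) in which both bids are non-exposure bids; the equilibrium allocation assigns B to agent 1 and A to agent 2, with welfare ∑_i v_i(X_i(b)) = 2, while OPT(v) = 4 − 2ε. -/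

import Mathlib

open Finset

/-- A valuation on `m` items: normalized at `∅`, monotone, nonnegative. -/
def IsValuation {m : ℕ} (v : Finset (Fin m) → ℝ) : Prop :=
  v ∅ = 0 ∧ (∀ S T : Finset (Fin m), S ⊆ T → v S ≤ v T) ∧ (∀ S, 0 ≤ v S)

/-- `S` is in the demand set of valuation `v` at prices `p`. -/
def InDemand {m : ℕ} (v : Finset (Fin m) → ℝ) (p : Fin m → ℝ) (S : Finset (Fin m)) : Prop :=
  ∀ T : Finset (Fin m), v T - ∑ j ∈ T, p j ≤ v S - ∑ j ∈ S, p j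

/-- Gross substitutes valuations. -/
def IsGS {m : ℕ} (v : Finset (Fin m) → ℝ) : Prop :=
  IsValuation v ∧
    ∀ p q : Fin m → ℝ, (∀ j, p j ≤ q j) →
      ∀ S : Finset (Fin m), InDemand v p S →
        ∃ T : Finset (Fin m), InDemand v q T ∧ ∀ j ∈ S, p j = q j → j ∈ T

/-- Additive valuations. -/
def IsAdditive {m : ℕ} (v : Finset (Fin m) → ℝ) : Prop :=
  ∃ w : Fin m → ℝ, (∀ j, 0 ≤ w j) ∧ ∀ S : Finset (Fin m), v S = ∑ j ∈ S, w j

/-- XOS valuations: a max over a nonempty finite family of nonnegative additive valuations. -/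
def IsXOS {m : ℕ} (v : Finset (Fin m) → ℝ) : Prop :=
  ∃ (k : ℕ) (w : Fin (k + 1) → Fin m → ℝ),
    (∀ i j, 0 ≤ w i j) ∧
    ∀ S : Finset (Fin m),
      v S = Finset.univ.sup' Finset.univ_nonempty (fun i => ∑ j ∈ S, w i j)

def GSvals (m : ℕ) : Set (Finset (Fin m) → ℝ) := {u | IsGS u}
def XOSvals (m : ℕ) : Set (Finset (Fin m) → ℝ) := {u | IsXOS u}

/-- The welfare `W^b(S)`: the maximum of `∑ i, b i (X i)` over allocations (pairwise disjoint
tuples of subsets) contained in `S`. -/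
noncomputable def W {n m : ℕ} (b : Fin n → Finset (Fin m) → ℝ) (S : Finset (Fin m)) : ℝ :=
  sSup {t : ℝ | ∃ X : Fin n → Finset (Fin m),
    (∀ i j : Fin n, i ≠ j → Disjoint (X i) (X j)) ∧ (∀ i, X i ⊆ S) ∧ t = ∑ i, b i (X i)}

/-- The welfare `W^{b₋ᵢ}(S)` with agent `i` omitted. -/
noncomputable def Wminus {n m : ℕ} (b : Fin n → Finset (Fin m) → ℝ) (i : Fin n)
    (S : Finset (Fin m)) : ℝ :=
  sSup {t : ℝ | ∃ X : Fin n → Finset (Fin m),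
    (∀ k l : Fin n, k ≠ l → Disjoint (X k) (X l)) ∧ (∀ k, X k ⊆ S) ∧
    t = ∑ k ∈ Finset.univ.erase i, b k (X k)}

/-- The welfare `W^b(x)` for a multiplicity vector `x : Fin m → ℕ`: maximum of `∑ i, b i (X i)`
over tuples of sets in which each item `j` is used at most `x j` times. -/
noncomputable def Wmult {n m : ℕ} (b : Fin n → Finset (Fin m) → ℝ) (x : Fin m → ℕ) : ℝ :=
  sSup {t : ℝ | ∃ X : Fin n → Finset (Fin m),
    (∀ j : Fin m, (Finset.univ.filter fun i => j ∈ X i).card ≤ x j) ∧ t = ∑ i, b i (X i)}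

/-- The optimal welfare for the true valuations. -/
noncomputable def OPT {n m : ℕ} (v : Fin n → Finset (Fin m) → ℝ) : ℝ := W v Finset.univ

/-- A mechanism: allocation and payment maps on bid profiles. -/
structure Mechanism (n m : ℕ) where
  alloc : (Fin n → Finset (Fin m) → ℝ) → Fin n → Finset (Fin m)
  pay : (Fin n → Finset (Fin m) → ℝ) → Fin n → ℝ

/-- A bid profile lies in the bid space `B`. -/
def InBidSpace {n m : ℕ} (B : Set (Finset (Fin m) → ℝ))
    (b : Fin n → Finset (Fin m) → ℝ) : Prop :=
  ∀ i, b i ∈ B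

/-- On bid profiles from `B`, the allocation is pairwise disjoint. -/
def AllocDisjoint {n m : ℕ} (M : Mechanism n m) (B : Set (Finset (Fin m) → ℝ)) : Prop :=
  ∀ b, InBidSpace B b → ∀ i j : Fin n, i ≠ j → Disjoint (M.alloc b i) (M.alloc b j)

/-- On bid profiles from `B`, payments are nonnegative. -/
def PayNonneg {n m : ℕ} (M : Mechanism n m) (B : Set (Finset (Fin m) → ℝ)) : Prop :=
  ∀ b, InBidSpace B b → ∀ i, 0 ≤ M.pay b i

/-- The utility of agent `i` with true valuation `v` under bid profile `b`. -/
noncomputable def util {n m : ℕ} (M : Mechanism n m) (v : Finset (Fin m) → ℝ) (i : Fin n)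
    (b : Fin n → Finset (Fin m) → ℝ) : ℝ :=
  v (M.alloc b i) - M.pay b i

/-- Declared welfare maximizer. -/
def IsDWM {n m : ℕ} (M : Mechanism n m) (B : Set (Finset (Fin m) → ℝ)) : Prop :=
  (∀ b, InBidSpace B b → ∑ i, b i (M.alloc b i) = W b Finset.univ) ∧
  (∀ b, InBidSpace B b → ∀ i, M.pay b i ≤ b i (M.alloc b i)) ∧
  (∀ b, InBidSpace B b → ∀ i : Fin n, ∃ b' : Fin n → Finset (Fin m) → ℝ,
    InBidSpace B b' ∧ b' i = b i ∧ M.alloc b' i = M.alloc b i ∧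
    M.pay b' i = b i (M.alloc b i))

/-- English Walrasian mechanism: welfare-maximizing allocation w.r.t. the bids, with
payments given by the minimum Walrasian prices `W^b(𝟙 + e_j) − W^b(𝟙)`. -/
def IsEnglish {n m : ℕ} (M : Mechanism n m) (B : Set (Finset (Fin m) → ℝ)) : Prop :=
  (∀ b, InBidSpace B b → ∑ i, b i (M.alloc b i) = W b Finset.univ) ∧
  (∀ b, InBidSpace B b → ∀ i, M.pay b i =
    ∑ j ∈ M.alloc b i,
      (Wmult b (fun k => if k = j then 2 else 1) - Wmult b (fun _ => 1)))

/-- VCG mechanism: welfare-maximizing allocation w.r.t. the bids, with externality payments. -/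
def IsVCG {n m : ℕ} (M : Mechanism n m) (B : Set (Finset (Fin m) → ℝ)) : Prop :=
  (∀ b, InBidSpace B b → ∑ i, b i (M.alloc b i) = W b Finset.univ) ∧
  (∀ b, InBidSpace B b → ∀ i, M.pay b i =
    Wminus b i Finset.univ - Wminus b i (Finset.univ \ M.alloc b i))

/-- Bid `bi` of agent `i` with true valuation `v` has exposure factor `γ`. -/
def HasExposureFactor {n m : ℕ} (M : Mechanism n m) (B : Set (Finset (Fin m) → ℝ))
    (v : Finset (Fin m) → ℝ) (i : Fin n) (bi : Finset (Fin m) → ℝ) (γ : ℝ) : Prop :=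
  ∀ b : Fin n → Finset (Fin m) → ℝ, InBidSpace B b → b i = bi →
    M.pay b i ≤ (1 + γ) * v (M.alloc b i)

/-- `b` is a pure Nash equilibrium for true valuations `v`. -/
noncomputable def IsNash {n m : ℕ} (M : Mechanism n m) (B : Set (Finset (Fin m) → ℝ))
    (v b : Fin n → Finset (Fin m) → ℝ) : Prop :=
  InBidSpace B b ∧
  ∀ i : Fin n, ∀ bi' ∈ B, util M (v i) i (Function.update b i bi') ≤ util M (v i) i b

/-- A finitely supported probability distribution. -/
structure FinDist (α : Type*) where
  supp : Finset α
  μ : α → ℝ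
  nonneg : ∀ a, 0 ≤ μ a
  sum_one : ∑ a ∈ supp, μ a = 1

/-- Expectation of `f` under a finitely supported distribution. -/
noncomputable def FinDist.exp {α : Type*} (D : FinDist α) (f : α → ℝ) : ℝ :=
  ∑ a ∈ D.supp, D.μ a * f a

/-- Bayes-Nash equilibrium: strategies map types in `V` to bids in `B`, and no unilateral
deviation (depending only on the agent's own type) improves expected utility. -/
noncomputable def IsBNE {n m : ℕ} (M : Mechanism n m) (V B : Set (Finset (Fin m) → ℝ))
    (D : FinDist (Fin n → Finset (Fin m) → ℝ))
    (s : Fin n → (Finset (Fin m) → ℝ) → Finset (Fin m) → ℝ) : Prop :=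
  (∀ i : Fin n, ∀ vi ∈ V, s i vi ∈ B) ∧
  ∀ i : Fin n, ∀ s' : (Finset (Fin m) → ℝ) → Finset (Fin m) → ℝ, (∀ vi ∈ V, s' vi ∈ B) →
    D.exp (fun v => util M (v i) i (Function.update (fun k => s k (v k)) i (s' (v i)))) ≤
    D.exp (fun v => util M (v i) i (fun k => s k (v k)))

/-- Strategy `si` of agent `i` has exposure factor `γ` under distribution `D`. -/
noncomputable def BayesExposure {n m : ℕ} (M : Mechanism n m)
    (V B : Set (Finset (Fin m) → ℝ)) (D : FinDist (Fin n → Finset (Fin m) → ℝ)) (i : Fin n)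
    (si : (Finset (Fin m) → ℝ) → Finset (Fin m) → ℝ) (γ : ℝ) : Prop :=
  ∀ c : (Finset (Fin m) → ℝ) → Fin n → Finset (Fin m) → ℝ,
    (∀ vi ∈ V, InBidSpace B (c vi) ∧ c vi i = si vi) →
    D.exp (fun v => M.pay (c (v i)) i) ≤
      (1 + γ) * D.exp (fun v => (v i) (M.alloc (c (v i)) i))

/-- A unit-demand valuation with weight vector `w`. -/
noncomputable def unitDemand {m : ℕ} (w : Fin m → ℝ) : Finset (Fin m) → ℝ :=
  fun S => if h : S.Nonempty then S.sup' h w else 0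

/-- Miscoordinated bid of agent 1: 1 on sets containing item B (index 1), else 0. -/
noncomputable def misB1 : Finset (Fin 2) → ℝ := fun S => if (1 : Fin 2) ∈ S then 1 else 0

/-- Miscoordinated bid of agent 2: 1 on sets containing item A (index 0), else 0. -/
noncomputable def misB2 : Finset (Fin 2) → ℝ := fun S => if (0 : Fin 2) ∈ S then 1 else 0


/-! ### Auxiliary lemmas -/

lemma fin2_cases (S : Finset (Fin 2)) : S = ∅ ∨ S = {0} ∨ S = {1} ∨ S = {0,1} := by
  revert S; decide

lemma sum_pair2 (r : Fin 2 → ℝ) : ∑ j ∈ ({0,1} : Finset (Fin 2)), r j = r 0 + r 1 :=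
  Finset.sum_pair (by decide)

lemma card_filter_fin2 (P : Fin 2 → Prop) [DecidablePred P] :
    (Finset.univ.filter P).card = (if P 0 then 1 else 0) + (if P 1 then 1 else 0) := by
  rw [Finset.card_filter, Fin.sum_univ_two]

lemma misB1_le_one (S : Finset (Fin 2)) : misB1 S ≤ 1 := by
  unfold misB1; split <;> norm_num
lemma misB1_nonneg (S : Finset (Fin 2)) : 0 ≤ misB1 S := by
  unfold misB1; split <;> norm_num
lemma misB2_le_one (S : Finset (Fin 2)) : misB2 S ≤ 1 := by
  unfold misB2; split <;> norm_num
lemma misB2_nonneg (S : Finset (Fin 2)) : 0 ≤ misB2 S := by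
  unfold misB2; split <;> norm_num

lemma misB1_erase0 (S : Finset (Fin 2)) : misB1 (S.erase 0) = misB1 S := by
  unfold misB1
  have : ((1:Fin 2) ∈ S.erase 0) ↔ (1:Fin 2) ∈ S := by simp [Finset.mem_erase]
  simp [this]
lemma misB2_erase1 (S : Finset (Fin 2)) : misB2 (S.erase 1) = misB2 S := by
  unfold misB2
  have : ((0:Fin 2) ∈ S.erase 1) ↔ (0:Fin 2) ∈ S := by simp [Finset.mem_erase]
  simp [this]

lemma misB1_GS : IsGS misB1 := by
  constructor
  · refine ⟨by simp [misB1], ?_, misB1_nonneg⟩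
    intro S T hST
    unfold misB1
    split_ifs with h1 h2 <;> first | exact (h2 (hST h1)).elim | norm_num
  · intro p q hpq S hS
    have h0 : 0 ∈ S → p 0 ≤ 0 := by
      intro h
      have := hS (S.erase 0)
      have hsum : ∑ j ∈ S, p j = p 0 + ∑ j ∈ S.erase 0, p j :=
        (Finset.add_sum_erase _ _ h).symm
      rw [misB1_erase0, hsum] at this; linarith
    have h1 : 1 ∈ S → p 1 ≤ 1 := by
      intro h
      have := hS (S.erase 1)
      have hm : misB1 (S.erase 1) = 0 := by simp [misB1]
      have hm2 : misB1 S = 1 := by simp [misB1, h]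
      have hsum : ∑ j ∈ S, p j = p 1 + ∑ j ∈ S.erase 1, p j :=
        (Finset.add_sum_erase _ _ h).symm
      rw [hm, hm2, hsum] at this; linarith
    by_cases hq0 : q 0 ≤ 0 <;> by_cases hq1 : q 1 ≤ 1
    · refine ⟨{0,1}, ?_, ?_⟩
      · intro U
        rcases fin2_cases U with rfl | rfl | rfl | rfl <;>
          simp [misB1, sum_pair2] <;> linarith
      · intro j _ _; fin_cases j <;> decide
    · refine ⟨{0}, ?_, ?_⟩
      · intro U
        push_neg at hq1
        rcases fin2_cases U with rfl | rfl | rfl | rfl <;>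
          simp [misB1, sum_pair2] <;> linarith
      · intro j hjS hpqe; fin_cases j
        · decide
        · exact absurd (hpqe ▸ h1 hjS) hq1
    · refine ⟨{1}, ?_, ?_⟩
      · intro U
        push_neg at hq0
        rcases fin2_cases U with rfl | rfl | rfl | rfl <;>
          simp [misB1, sum_pair2] <;> linarith
      · intro j hjS hpqe; fin_cases j
        · exact absurd (hpqe ▸ h0 hjS) hq0
        · decide
    · refine ⟨∅, ?_, ?_⟩
      · intro U
        push_neg at hq0 hq1
        rcases fin2_cases U with rfl | rfl | rfl | rfl <;>
          simp [misB1, sum_pair2] <;> linarith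
      · intro j hjS hpqe; fin_cases j
        · exact absurd (hpqe ▸ h0 hjS) hq0
        · exact absurd (hpqe ▸ h1 hjS) (by exact fun h => hq1 h)

lemma misB2_GS : IsGS misB2 := by
  constructor
  · refine ⟨by simp [misB2], ?_, misB2_nonneg⟩
    intro S T hST
    unfold misB2
    split_ifs with h1 h2 <;> first | exact (h2 (hST h1)).elim | norm_num
  · intro p q hpq S hS
    have h1 : 1 ∈ S → p 1 ≤ 0 := by
      intro h
      have := hS (S.erase 1)
      have hsum : ∑ j ∈ S, p j = p 1 + ∑ j ∈ S.erase 1, p j :=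
        (Finset.add_sum_erase _ _ h).symm
      rw [misB2_erase1, hsum] at this; linarith
    have h0 : 0 ∈ S → p 0 ≤ 1 := by
      intro h
      have := hS (S.erase 0)
      have hm : misB2 (S.erase 0) = 0 := by simp [misB2]
      have hm2 : misB2 S = 1 := by simp [misB2, h]
      have hsum : ∑ j ∈ S, p j = p 0 + ∑ j ∈ S.erase 0, p j :=
        (Finset.add_sum_erase _ _ h).symm
      rw [hm, hm2, hsum] at this; linarith
    by_cases hq1 : q 1 ≤ 0 <;> by_cases hq0 : q 0 ≤ 1
    · refine ⟨{0,1}, ?_, ?_⟩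
      · intro U
        rcases fin2_cases U with rfl | rfl | rfl | rfl <;>
          simp [misB2, sum_pair2] <;> linarith
      · intro j _ _; fin_cases j <;> decide
    · refine ⟨{1}, ?_, ?_⟩
      · intro U
        push_neg at hq0
        rcases fin2_cases U with rfl | rfl | rfl | rfl <;>
          simp [misB2, sum_pair2] <;> linarith
      · intro j hjS hpqe; fin_cases j
        · exact absurd (hpqe ▸ h0 hjS) (not_le.mpr (by push_neg at hq0; exact hq0))
        · decide
    · refine ⟨{0}, ?_, ?_⟩
      · intro U
        push_neg at hq1
        rcases fin2_cases U with rfl | rfl | rfl | rfl <;>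
          simp [misB2, sum_pair2] <;> linarith
      · intro j hjS hpqe; fin_cases j
        · decide
        · exact absurd (hpqe ▸ h1 hjS) hq1
    · refine ⟨∅, ?_, ?_⟩
      · intro U
        push_neg at hq0 hq1
        rcases fin2_cases U with rfl | rfl | rfl | rfl <;>
          simp [misB2, sum_pair2] <;> linarith
      · intro j hjS hpqe; fin_cases j
        · exact absurd (hpqe ▸ h0 hjS) (not_le.mpr (by push_neg at hq0; exact hq0))
        · exact absurd (hpqe ▸ h1 hjS) hq1

lemma fin2_elem (j : Fin 2) : j = 0 ∨ j = 1 := by revert j; decide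

section WmultHelpers
variable (b : Fin 2 → Finset (Fin 2) → ℝ) (x : Fin 2 → ℕ)

lemma Wmult_nonempty : {t : ℝ | ∃ X : Fin 2 → Finset (Fin 2),
    (∀ j : Fin 2, (Finset.univ.filter fun i => j ∈ X i).card ≤ x j) ∧
    t = ∑ i, b i (X i)}.Nonempty :=
  ⟨∑ i, b i ((fun _ => ∅) i), fun _ => ∅, by simp, rfl⟩

lemma Wmult_bdd (c0 c1 : ℝ) (h0 : ∀ S, b 0 S ≤ c0) (h1 : ∀ S, b 1 S ≤ c1) :
    BddAbove {t : ℝ | ∃ X : Fin 2 → Finset (Fin 2),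
      (∀ j : Fin 2, (Finset.univ.filter fun i => j ∈ X i).card ≤ x j) ∧
      t = ∑ i, b i (X i)} := by
  refine ⟨c0 + c1, ?_⟩
  rintro t ⟨X, -, rfl⟩
  rw [Fin.sum_univ_two]
  exact add_le_add (h0 _) (h1 _)

lemma Wmult_le (c : ℝ)
    (h : ∀ X : Fin 2 → Finset (Fin 2),
      (∀ j : Fin 2, (Finset.univ.filter fun i => j ∈ X i).card ≤ x j) →
      b 0 (X 0) + b 1 (X 1) ≤ c) : Wmult b x ≤ c := by
  apply csSup_le (Wmult_nonempty b x)
  rintro t ⟨X, hX, rfl⟩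
  rw [Fin.sum_univ_two]
  exact h X hX

lemma le_Wmult (t : ℝ) (X : Fin 2 → Finset (Fin 2))
    (hX : ∀ j : Fin 2, (Finset.univ.filter fun i => j ∈ X i).card ≤ x j)
    (ht : t = b 0 (X 0) + b 1 (X 1))
    (hbdd : BddAbove {t : ℝ | ∃ X : Fin 2 → Finset (Fin 2),
      (∀ j : Fin 2, (Finset.univ.filter fun i => j ∈ X i).card ≤ x j) ∧
      t = ∑ i, b i (X i)}) : t ≤ Wmult b x :=
  le_csSup hbdd ⟨X, hX, by rw [Fin.sum_univ_two]; exact ht⟩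

lemma W_nonempty : {t : ℝ | ∃ X : Fin 2 → Finset (Fin 2),
    (∀ i j : Fin 2, i ≠ j → Disjoint (X i) (X j)) ∧ (∀ i, X i ⊆ Finset.univ) ∧
    t = ∑ i, b i (X i)}.Nonempty :=
  ⟨∑ i, b i ((fun _ => ∅) i), fun _ => ∅, by simp, by simp, rfl⟩

lemma W_bdd (c0 c1 : ℝ) (h0 : ∀ S, b 0 S ≤ c0) (h1 : ∀ S, b 1 S ≤ c1) :
    BddAbove {t : ℝ | ∃ X : Fin 2 → Finset (Fin 2),
      (∀ i j : Fin 2, i ≠ j → Disjoint (X i) (X j)) ∧ (∀ i, X i ⊆ Finset.univ) ∧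
      t = ∑ i, b i (X i)} := by
  refine ⟨c0 + c1, ?_⟩
  rintro t ⟨X, -, -, rfl⟩
  rw [Fin.sum_univ_two]
  exact add_le_add (h0 _) (h1 _)

lemma W_le (c : ℝ)
    (h : ∀ X : Fin 2 → Finset (Fin 2), (∀ i j : Fin 2, i ≠ j → Disjoint (X i) (X j)) →
      b 0 (X 0) + b 1 (X 1) ≤ c) : W b Finset.univ ≤ c := by
  apply csSup_le (W_nonempty b)
  rintro t ⟨X, hX, -, rfl⟩
  rw [Fin.sum_univ_two]
  exact h X hX

lemma le_W (t : ℝ) (X : Fin 2 → Finset (Fin 2))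
    (hX : ∀ i j : Fin 2, i ≠ j → Disjoint (X i) (X j))
    (ht : t = b 0 (X 0) + b 1 (X 1))
    (hbdd : BddAbove {t : ℝ | ∃ X : Fin 2 → Finset (Fin 2),
      (∀ i j : Fin 2, i ≠ j → Disjoint (X i) (X j)) ∧ (∀ i, X i ⊆ Finset.univ) ∧
      t = ∑ i, b i (X i)}) : t ≤ W b Finset.univ :=
  le_csSup hbdd ⟨X, hX, fun _ => Finset.subset_univ _, by rw [Fin.sum_univ_two]; exact ht⟩

lemma Wmult_one_le_W
    (hbdd : BddAbove {t : ℝ | ∃ X : Fin 2 → Finset (Fin 2),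
      (∀ i j : Fin 2, i ≠ j → Disjoint (X i) (X j)) ∧ (∀ i, X i ⊆ Finset.univ) ∧
      t = ∑ i, b i (X i)}) :
    Wmult b (fun _ => 1) ≤ W b Finset.univ := by
  apply csSup_le (Wmult_nonempty b _)
  rintro t ⟨X, hX, rfl⟩
  apply le_csSup hbdd
  refine ⟨X, ?_, fun _ => Finset.subset_univ _, rfl⟩
  intro i j hij
  rw [Finset.disjoint_left]
  intro a haX hajX
  have := hX a
  rw [card_filter_fin2] at this
  have h0 : a ∈ X 0 ∧ a ∈ X 1 := by
    fin_cases i <;> fin_cases j <;>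
      first | exact absurd rfl hij | exact ⟨haX, hajX⟩ | exact ⟨hajX, haX⟩
  simp [h0.1, h0.2] at this

lemma Wmult_mono (y : Fin 2 → ℕ) (hxy : ∀ j, x j ≤ y j)
    (hbdd : BddAbove {t : ℝ | ∃ X : Fin 2 → Finset (Fin 2),
      (∀ j : Fin 2, (Finset.univ.filter fun i => j ∈ X i).card ≤ y j) ∧
      t = ∑ i, b i (X i)}) : Wmult b x ≤ Wmult b y := by
  apply csSup_le (Wmult_nonempty b x)
  rintro t ⟨X, hX, rfl⟩
  exact le_csSup hbdd ⟨X, fun j => le_trans (hX j) (hxy j), rfl⟩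

end WmultHelpers

/-! ### Price bounds against a `misB` opponent -/

lemma price0_le_of_misB1 (b : Fin 2 → Finset (Fin 2) → ℝ) (h0 : b 0 = misB1)
    (hu : IsGS (b 1)) :
    Wmult b (fun k => if k = (0 : Fin 2) then 2 else 1) ≤ Wmult b (fun _ => 1) := by
  have hmono : ∀ S, b 1 S ≤ b 1 Finset.univ := fun S => hu.1.2.1 S _ (Finset.subset_univ S)
  have hb0 : ∀ S, b 0 S ≤ 1 := fun S => by rw [h0]; exact misB1_le_one S
  apply Wmult_le
  intro X hX
  have hval : b 0 (X 0) + b 1 (X 1) = b 0 ((X 0).erase 0) + b 1 (X 1) := by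
    rw [h0, misB1_erase0]
  rw [hval]
  refine le_Wmult b _ _ (![(X 0).erase 0, X 1]) ?_ (by simp)
    (Wmult_bdd b _ 1 (b 1 Finset.univ) hb0 hmono)
  intro j
  rw [card_filter_fin2]
  simp only [Matrix.cons_val_zero, Matrix.cons_val_one, Matrix.head_cons]
  rcases fin2_elem j with rfl | rfl
  · by_cases hc : (0:Fin 2) ∈ X 1 <;> simp [hc]
  · have h1X := hX 1
    rw [card_filter_fin2] at h1X
    rw [if_neg (by decide : ¬(1 : Fin 2) = 0)] at h1X
    have hmem : ((1 : Fin 2) ∈ (X 0).erase 0) ↔ (1 : Fin 2) ∈ X 0 := by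
      simp [Finset.mem_erase]
    simp only [hmem]
    exact h1X

lemma price1_le_of_misB1 (b : Fin 2 → Finset (Fin 2) → ℝ) (h0 : b 0 = misB1)
    (hu : IsGS (b 1)) :
    Wmult b (fun k => if k = (1 : Fin 2) then 2 else 1) ≤ Wmult b (fun _ => 1) + 1 := by
  have hmono : ∀ S, b 1 S ≤ b 1 Finset.univ := fun S => hu.1.2.1 S _ (Finset.subset_univ S)
  have hb0 : ∀ S, b 0 S ≤ 1 := fun S => by rw [h0]; exact misB1_le_one S
  apply Wmult_le
  intro X hX
  have hkey : b 0 ((X 0).erase 1) + b 1 (X 1) ≤ Wmult b (fun _ => 1) := by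
    refine le_Wmult b _ _ (![(X 0).erase 1, X 1]) ?_ (by simp)
      (Wmult_bdd b _ 1 (b 1 Finset.univ) hb0 hmono)
    intro j
    rw [card_filter_fin2]
    simp only [Matrix.cons_val_zero, Matrix.cons_val_one, Matrix.head_cons]
    rcases fin2_elem j with rfl | rfl
    · have h0X := hX 0
      rw [card_filter_fin2] at h0X
      rw [if_neg (by decide : ¬(0 : Fin 2) = 1)] at h0X
      have hmem : ((0 : Fin 2) ∈ (X 0).erase 1) ↔ (0 : Fin 2) ∈ X 0 := by
        simp [Finset.mem_erase]
      simp only [hmem]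
      exact h0X
    · by_cases hc : (1:Fin 2) ∈ X 1 <;> simp [hc]
  have he : b 0 ((X 0).erase 1) = 0 := by rw [h0]; simp [misB1]
  have hle : b 0 (X 0) ≤ 1 := hb0 _
  linarith

lemma price1_le_of_misB2 (b : Fin 2 → Finset (Fin 2) → ℝ) (h1 : b 1 = misB2)
    (hu : IsGS (b 0)) :
    Wmult b (fun k => if k = (1 : Fin 2) then 2 else 1) ≤ Wmult b (fun _ => 1) := by
  have hmono : ∀ S, b 0 S ≤ b 0 Finset.univ := fun S => hu.1.2.1 S _ (Finset.subset_univ S)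
  have hb1 : ∀ S, b 1 S ≤ 1 := fun S => by rw [h1]; exact misB2_le_one S
  apply Wmult_le
  intro X hX
  have hval : b 0 (X 0) + b 1 (X 1) = b 0 (X 0) + b 1 ((X 1).erase 1) := by
    rw [h1, misB2_erase1]
  rw [hval]
  refine le_Wmult b _ _ (![X 0, (X 1).erase 1]) ?_ (by simp)
    (Wmult_bdd b _ (b 0 Finset.univ) 1 hmono hb1)
  intro j
  rw [card_filter_fin2]
  simp only [Matrix.cons_val_zero, Matrix.cons_val_one, Matrix.head_cons]
  rcases fin2_elem j with rfl | rfl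
  · have h0X := hX 0
    rw [card_filter_fin2] at h0X
    rw [if_neg (by decide : ¬(0 : Fin 2) = 1)] at h0X
    have hmem : ((0 : Fin 2) ∈ (X 1).erase 1) ↔ (0 : Fin 2) ∈ X 1 := by
      simp [Finset.mem_erase]
    simp only [hmem]
    exact h0X
  · by_cases hc : (1:Fin 2) ∈ X 0 <;> simp [hc]

lemma price0_le_of_misB2 (b : Fin 2 → Finset (Fin 2) → ℝ) (h1 : b 1 = misB2)
    (hu : IsGS (b 0)) :
    Wmult b (fun k => if k = (0 : Fin 2) then 2 else 1) ≤ Wmult b (fun _ => 1) + 1 := by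
  have hmono : ∀ S, b 0 S ≤ b 0 Finset.univ := fun S => hu.1.2.1 S _ (Finset.subset_univ S)
  have hb1 : ∀ S, b 1 S ≤ 1 := fun S => by rw [h1]; exact misB2_le_one S
  apply Wmult_le
  intro X hX
  have hkey : b 0 (X 0) + b 1 ((X 1).erase 0) ≤ Wmult b (fun _ => 1) := by
    refine le_Wmult b _ _ (![X 0, (X 1).erase 0]) ?_ (by simp)
      (Wmult_bdd b _ (b 0 Finset.univ) 1 hmono hb1)
    intro j
    rw [card_filter_fin2]
    simp only [Matrix.cons_val_zero, Matrix.cons_val_one, Matrix.head_cons]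
    rcases fin2_elem j with rfl | rfl
    · by_cases hc : (0:Fin 2) ∈ X 0 <;> simp [hc]
    · have h1X := hX 1
      rw [card_filter_fin2] at h1X
      rw [if_neg (by decide : ¬(1 : Fin 2) = 0)] at h1X
      have hmem : ((1 : Fin 2) ∈ (X 1).erase 0) ↔ (1 : Fin 2) ∈ X 1 := by
        simp [Finset.mem_erase]
      simp only [hmem]
      exact h1X
  have he : b 1 ((X 1).erase 0) = 0 := by rw [h1]; simp [misB2]
  have hle : b 1 (X 1) ≤ 1 := hb1 _
  linarith

lemma price0_ge_of_misB2 (M : Mechanism 2 2) (hdisj : AllocDisjoint M (GSvals 2))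
    (hEng : IsEnglish M (GSvals 2)) (b : Fin 2 → Finset (Fin 2) → ℝ)
    (hb : InBidSpace (GSvals 2) b) (h1 : b 1 = misB2) (h0A : (0:Fin 2) ∈ M.alloc b 0) :
    Wmult b (fun _ => 1) + 1 ≤ Wmult b (fun k => if k = (0 : Fin 2) then 2 else 1) := by
  have hu : IsGS (b 0) := hb 0
  have hmono : ∀ S, b 0 S ≤ b 0 Finset.univ := fun S => hu.1.2.1 S _ (Finset.subset_univ S)
  have hb1 : ∀ S, b 1 S ≤ 1 := fun S => by rw [h1]; exact misB2_le_one S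
  have hbddW := W_bdd b (b 0 Finset.univ) 1 hmono hb1
  have step1 := Wmult_one_le_W b hbddW
  have hW := hEng.1 b hb
  rw [Fin.sum_univ_two] at hW
  have hdis : Disjoint (M.alloc b 0) (M.alloc b 1) := hdisj b hb 0 1 (by decide)
  have h0n1 : (0:Fin 2) ∉ M.alloc b 1 := Finset.disjoint_left.mp hdis h0A
  have hmis : b 1 (M.alloc b 1) = 0 := by rw [h1]; simp [misB2, h0n1]
  have hins : b 1 (insert 0 (M.alloc b 1)) = 1 := by rw [h1]; simp [misB2]
  have step2 : W b Finset.univ + 1 ≤ Wmult b (fun k => if k = (0:Fin 2) then 2 else 1) := by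
    refine le_Wmult b _ _ (![M.alloc b 0, insert 0 (M.alloc b 1)]) ?_ ?_
      (Wmult_bdd b _ (b 0 Finset.univ) 1 hmono hb1)
    · intro j
      rw [card_filter_fin2]
      simp only [Matrix.cons_val_zero, Matrix.cons_val_one, Matrix.head_cons]
      rcases fin2_elem j with rfl | rfl
      · rw [if_pos rfl]
        by_cases hc : (0:Fin 2) ∈ M.alloc b 0 <;> simp [hc]
      · rw [if_neg (by decide : ¬(1:Fin 2) = 0)]
        have hmem : ((1:Fin 2) ∈ insert (0:Fin 2) (M.alloc b 1)) ↔ (1:Fin 2) ∈ M.alloc b 1 := by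
          simp
        simp only [hmem]
        by_cases hx : (1:Fin 2) ∈ M.alloc b 0
        · have hy := Finset.disjoint_left.mp hdis hx
          simp [hx, hy]
        · simp only [hx, if_false]
          split_ifs <;> norm_num
    · simp only [Matrix.cons_val_zero, Matrix.cons_val_one, Matrix.head_cons]
      rw [← hW, hmis, hins]; ring
  linarith

lemma price1_ge_of_misB1 (M : Mechanism 2 2) (hdisj : AllocDisjoint M (GSvals 2))
    (hEng : IsEnglish M (GSvals 2)) (b : Fin 2 → Finset (Fin 2) → ℝ)
    (hb : InBidSpace (GSvals 2) b) (h0 : b 0 = misB1) (h1A : (1:Fin 2) ∈ M.alloc b 1) :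
    Wmult b (fun _ => 1) + 1 ≤ Wmult b (fun k => if k = (1 : Fin 2) then 2 else 1) := by
  have hu : IsGS (b 1) := hb 1
  have hmono : ∀ S, b 1 S ≤ b 1 Finset.univ := fun S => hu.1.2.1 S _ (Finset.subset_univ S)
  have hb0 : ∀ S, b 0 S ≤ 1 := fun S => by rw [h0]; exact misB1_le_one S
  have hbddW := W_bdd b 1 (b 1 Finset.univ) hb0 hmono
  have step1 := Wmult_one_le_W b hbddW
  have hW := hEng.1 b hb
  rw [Fin.sum_univ_two] at hW
  have hdis : Disjoint (M.alloc b 0) (M.alloc b 1) := hdisj b hb 0 1 (by decide)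
  have h1n0 : (1:Fin 2) ∉ M.alloc b 0 := Finset.disjoint_right.mp hdis h1A
  have hmis : b 0 (M.alloc b 0) = 0 := by rw [h0]; simp [misB1, h1n0]
  have hins : b 0 (insert 1 (M.alloc b 0)) = 1 := by rw [h0]; simp [misB1]
  have step2 : W b Finset.univ + 1 ≤ Wmult b (fun k => if k = (1:Fin 2) then 2 else 1) := by
    refine le_Wmult b _ _ (![insert 1 (M.alloc b 0), M.alloc b 1]) ?_ ?_
      (Wmult_bdd b _ 1 (b 1 Finset.univ) hb0 hmono)
    · intro j
      rw [card_filter_fin2]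
      simp only [Matrix.cons_val_zero, Matrix.cons_val_one, Matrix.head_cons]
      rcases fin2_elem j with rfl | rfl
      · rw [if_neg (by decide : ¬(0:Fin 2) = 1)]
        have hmem : ((0:Fin 2) ∈ insert (1:Fin 2) (M.alloc b 0)) ↔ (0:Fin 2) ∈ M.alloc b 0 := by
          simp
        simp only [hmem]
        by_cases hx : (0:Fin 2) ∈ M.alloc b 1
        · have hy := Finset.disjoint_right.mp hdis hx
          simp [hx, hy]
        · simp only [hx, if_false]
          split_ifs <;> norm_num
      · rw [if_pos rfl]
        by_cases hc : (1:Fin 2) ∈ M.alloc b 1 <;> simp [hc]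
    · simp only [Matrix.cons_val_zero, Matrix.cons_val_one, Matrix.head_cons]
      rw [← hW, hmis, hins]; ring
  linarith

lemma unitDemand_empty {m : ℕ} (w : Fin m → ℝ) : unitDemand w ∅ = 0 := by
  simp [unitDemand]

lemma unitDemand_single {m : ℕ} (w : Fin m → ℝ) (j : Fin m) : unitDemand w {j} = w j := by
  simp [unitDemand]

lemma unitDemand_pair (w : Fin 2 → ℝ) : unitDemand w {0,1} = max (w 0) (w 1) := by
  rw [unitDemand]
  rw [dif_pos (by decide : (({0,1} : Finset (Fin 2))).Nonempty)]
  apply le_antisymm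
  · apply Finset.sup'_le
    intro j hj
    rcases fin2_elem j with rfl | rfl
    · exact le_max_left _ _
    · exact le_max_right _ _
  · apply max_le
    · exact Finset.le_sup' w (by decide)
    · exact Finset.le_sup' w (by decide)

/-- miscoordination; PoA₀ ≥ 2 for the English Walrasian mechanism:
with unit-demand valuations w¹ = (2−ε, 1), w² = (1, 2−ε) (item A is index 0, item B index 1)
and the miscoordinated bids, the bid profile is a pure Nash equilibrium in non-exposure bids
of every English Walrasian mechanism on the GS bid space; the allocation gives B to agent 1
and A to agent 2, with welfare 2, while OPT = 4 − 2ε. -/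
theorem stmt15 (ε : ℝ) (hε : 0 < ε) (hε1 : ε < 1) :
    ∀ M : Mechanism 2 2,
      AllocDisjoint M (GSvals 2) → PayNonneg M (GSvals 2) → IsEnglish M (GSvals 2) →
        IsNash M (GSvals 2) ![unitDemand ![2 - ε, 1], unitDemand ![1, 2 - ε]]
          ![misB1, misB2] ∧
        (∀ i : Fin 2,
          HasExposureFactor M (GSvals 2)
            (![unitDemand ![2 - ε, 1], unitDemand ![1, 2 - ε]] i) i (![misB1, misB2] i) 0) ∧
        M.alloc ![misB1, misB2] 0 = {1} ∧ M.alloc ![misB1, misB2] 1 = {0} ∧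
        (∑ i, ![unitDemand ![2 - ε, 1], unitDemand ![1, 2 - ε]] i
            (M.alloc ![misB1, misB2] i)) = 2 ∧
        OPT ![unitDemand ![2 - ε, 1], unitDemand ![1, 2 - ε]] = 4 - 2 * ε := by
  intro M hdisj hpn hEng
  -- abbreviations
  have hbb0 : (![misB1, misB2] : Fin 2 → Finset (Fin 2) → ℝ) 0 = misB1 := rfl
  have hbb1 : (![misB1, misB2] : Fin 2 → Finset (Fin 2) → ℝ) 1 = misB2 := rfl
  have hv0 : (![unitDemand ![2 - ε, 1], unitDemand ![1, 2 - ε]] :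
      Fin 2 → Finset (Fin 2) → ℝ) 0 = unitDemand ![2 - ε, 1] := rfl
  have hv1 : (![unitDemand ![2 - ε, 1], unitDemand ![1, 2 - ε]] :
      Fin 2 → Finset (Fin 2) → ℝ) 1 = unitDemand ![1, 2 - ε] := rfl
  have hw10 : (![2 - ε, 1] : Fin 2 → ℝ) 0 = 2 - ε := rfl
  have hw11 : (![2 - ε, 1] : Fin 2 → ℝ) 1 = 1 := rfl
  have hw20 : (![1, 2 - ε] : Fin 2 → ℝ) 0 = 1 := rfl
  have hw21 : (![1, 2 - ε] : Fin 2 → ℝ) 1 = 2 - ε := rfl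
  have hbb : InBidSpace (GSvals 2) (![misB1, misB2] : Fin 2 → Finset (Fin 2) → ℝ) := by
    intro i
    rcases fin2_elem i with rfl | rfl
    · exact misB1_GS
    · exact misB2_GS
  -- value bounds for the true valuations
  have hv0le : ∀ S, unitDemand ![2 - ε, 1] S ≤ 2 - ε := by
    intro S
    rcases fin2_cases S with rfl | rfl | rfl | rfl
    · rw [unitDemand_empty]; linarith
    · rw [unitDemand_single, hw10]
    · rw [unitDemand_single, hw11]; linarith
    · rw [unitDemand_pair, hw10, hw11]
      exact max_le le_rfl (by linarith)
  have hv1le : ∀ S, unitDemand ![1, 2 - ε] S ≤ 2 - ε := by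
    intro S
    rcases fin2_cases S with rfl | rfl | rfl | rfl
    · rw [unitDemand_empty]; linarith
    · rw [unitDemand_single, hw20]; linarith
    · rw [unitDemand_single, hw21]
    · rw [unitDemand_pair, hw20, hw21]
      exact max_le (by linarith) le_rfl
  -- welfare of the bid profile
  have hWbb : W (![misB1, misB2] : Fin 2 → Finset (Fin 2) → ℝ) Finset.univ = 2 := by
    apply le_antisymm
    · apply W_le
      intro X _
      have h1 := misB1_le_one (X 0)
      have h2 := misB2_le_one (X 1)
      rw [hbb0, hbb1]
      linarith
    · refine le_W _ 2 (![{1}, {0}]) ?_ ?_ (W_bdd _ 1 1 misB1_le_one misB2_le_one)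
      · intro i j hij
        rcases fin2_elem i with rfl | rfl <;> rcases fin2_elem j with rfl | rfl <;>
          first
            | exact absurd rfl hij
            | (simp only [Matrix.cons_val_zero, Matrix.cons_val_one, Matrix.head_cons]; decide)
      · simp only [Matrix.cons_val_zero, Matrix.cons_val_one, Matrix.head_cons, hbb0, hbb1]
        norm_num [misB1, misB2]
  -- the allocation at the bid profile
  have hsum := hEng.1 _ hbb
  rw [Fin.sum_univ_two, hWbb, hbb0, hbb1] at hsum
  have hdis : Disjoint (M.alloc ![misB1, misB2] 0) (M.alloc ![misB1, misB2] 1) :=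
    hdisj _ hbb 0 1 (by decide)
  have h1A0 : (1 : Fin 2) ∈ M.alloc ![misB1, misB2] 0 := by
    by_contra h
    have h1 : misB1 (M.alloc ![misB1, misB2] 0) = 0 := by simp [misB1, h]
    have h2 := misB2_le_one (M.alloc ![misB1, misB2] 1)
    rw [h1] at hsum
    linarith
  have h0A1 : (0 : Fin 2) ∈ M.alloc ![misB1, misB2] 1 := by
    by_contra h
    have h1 : misB2 (M.alloc ![misB1, misB2] 1) = 0 := by simp [misB2, h]
    have h2 := misB1_le_one (M.alloc ![misB1, misB2] 0)
    rw [h1] at hsum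
    linarith
  have halloc0 : M.alloc ![misB1, misB2] 0 = {1} := by
    rcases fin2_cases (M.alloc ![misB1, misB2] 0) with h | h | h | h
    · rw [h] at h1A0; exact absurd h1A0 (by decide)
    · rw [h] at h1A0; exact absurd h1A0 (by decide)
    · exact h
    · exfalso
      have h0A0 : (0 : Fin 2) ∈ M.alloc ![misB1, misB2] 0 := by rw [h]; decide
      exact (Finset.disjoint_left.mp hdis h0A0) h0A1
  have halloc1 : M.alloc ![misB1, misB2] 1 = {0} := by
    rcases fin2_cases (M.alloc ![misB1, misB2] 1) with h | h | h | h
    · rw [h] at h0A1; exact absurd h0A1 (by decide)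
    · exact h
    · rw [h] at h0A1; exact absurd h0A1 (by decide)
    · exfalso
      have h1A1 : (1 : Fin 2) ∈ M.alloc ![misB1, misB2] 1 := by rw [h]; decide
      exact (Finset.disjoint_left.mp hdis h1A0) h1A1
  -- payment of agent 0 at the bid profile is ≤ 0
  have hpay0 : M.pay ![misB1, misB2] 0 ≤ 0 := by
    have hp := hEng.2 _ hbb 0
    rw [halloc0, Finset.sum_singleton] at hp
    have := price1_le_of_misB2 (![misB1, misB2]) rfl misB1_GS
    rw [hp]; linarith
  refine ⟨?_, ?_, halloc0, halloc1, ?_, ?_⟩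
  · -- Nash equilibrium
    refine ⟨hbb, ?_⟩
    intro i bi' hbi'
    rcases fin2_elem i with rfl | rfl
    · -- agent 0 deviates
      have hb'0 : Function.update (![misB1, misB2] : Fin 2 → Finset (Fin 2) → ℝ) 0 bi' 0 = bi' :=
        Function.update_self _ _ _
      have hb'1 : Function.update (![misB1, misB2] : Fin 2 → Finset (Fin 2) → ℝ) 0 bi' 1 =
          misB2 := by rw [Function.update_of_ne (by decide)]; rfl
      have hb' : InBidSpace (GSvals 2)
          (Function.update (![misB1, misB2] : Fin 2 → Finset (Fin 2) → ℝ) 0 bi') := by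
        intro k
        rcases fin2_elem k with rfl | rfl
        · rw [hb'0]; exact hbi'
        · rw [hb'1]; exact misB2_GS
      have hugs : IsGS bi' := hbi'
      have hmono : ∀ S, bi' S ≤ bi' Finset.univ := fun S => hugs.1.2.1 S _ (Finset.subset_univ S)
      have hmono' : ∀ S, Function.update (![misB1, misB2] : Fin 2 → Finset (Fin 2) → ℝ) 0 bi' 0 S
          ≤ bi' Finset.univ := by rw [hb'0]; exact hmono
      have hb1le : ∀ S, Function.update (![misB1, misB2] : Fin 2 → Finset (Fin 2) → ℝ) 0 bi' 1 S
          ≤ 1 := by rw [hb'1]; exact misB2_le_one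
      have hpay' := hEng.2 _ hb' 0
      simp only [util, hv0]
      rw [halloc0, hpay']
      have hval1 : unitDemand ![2 - ε, 1] {1} = 1 := by rw [unitDemand_single, hw11]
      rw [hval1]
      by_cases h0A : (0 : Fin 2) ∈ M.alloc (Function.update (![misB1, misB2] :
          Fin 2 → Finset (Fin 2) → ℝ) 0 bi') 0
      · have hge := price0_ge_of_misB2 M hdisj hEng _ hb' hb'1 h0A
        have hp1 : Wmult (Function.update (![misB1, misB2] : Fin 2 → Finset (Fin 2) → ℝ) 0 bi')
            (fun _ => 1) ≤ Wmult (Function.update (![misB1, misB2] :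
            Fin 2 → Finset (Fin 2) → ℝ) 0 bi') (fun k => if k = (1:Fin 2) then 2 else 1) := by
          refine Wmult_mono _ _ _ (fun j => by split <;> norm_num)
            (Wmult_bdd _ _ (bi' Finset.univ) 1 hmono' hb1le)
        have hp0 : Wmult (Function.update (![misB1, misB2] : Fin 2 → Finset (Fin 2) → ℝ) 0 bi')
            (fun _ => 1) ≤ Wmult (Function.update (![misB1, misB2] :
            Fin 2 → Finset (Fin 2) → ℝ) 0 bi') (fun k => if k = (0:Fin 2) then 2 else 1) := by
          linarith
        have hnn : ∀ j ∈ M.alloc (Function.update (![misB1, misB2] :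
            Fin 2 → Finset (Fin 2) → ℝ) 0 bi') 0,
            0 ≤ Wmult (Function.update (![misB1, misB2] : Fin 2 → Finset (Fin 2) → ℝ) 0 bi')
              (fun k => if k = j then 2 else 1) -
            Wmult (Function.update (![misB1, misB2] : Fin 2 → Finset (Fin 2) → ℝ) 0 bi')
              (fun _ => 1) := by
          intro j _
          rcases fin2_elem j with rfl | rfl
          · linarith
          · linarith
        have hsingle := Finset.single_le_sum hnn h0A
        have hvle := hv0le (M.alloc (Function.update (![misB1, misB2] :
            Fin 2 → Finset (Fin 2) → ℝ) 0 bi') 0)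
        linarith
      · have hpge := hpn _ hb' 0
        rw [hpay'] at hpge
        have hvle : unitDemand ![2 - ε, 1] (M.alloc (Function.update (![misB1, misB2] :
            Fin 2 → Finset (Fin 2) → ℝ) 0 bi') 0) ≤ 1 := by
          rcases fin2_cases (M.alloc (Function.update (![misB1, misB2] :
              Fin 2 → Finset (Fin 2) → ℝ) 0 bi') 0) with h | h | h | h
          · rw [h, unitDemand_empty]; norm_num
          · rw [h] at h0A; exact absurd (by decide) h0A
          · rw [h, unitDemand_single, hw11]
          · rw [h] at h0A; exact absurd (by decide) h0A
        linarith
    · -- agent 1 deviates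
      have hb'0 : Function.update (![misB1, misB2] : Fin 2 → Finset (Fin 2) → ℝ) 1 bi' 0 =
          misB1 := by rw [Function.update_of_ne (by decide)]; rfl
      have hb'1 : Function.update (![misB1, misB2] : Fin 2 → Finset (Fin 2) → ℝ) 1 bi' 1 = bi' :=
        Function.update_self _ _ _
      have hb' : InBidSpace (GSvals 2)
          (Function.update (![misB1, misB2] : Fin 2 → Finset (Fin 2) → ℝ) 1 bi') := by
        intro k
        rcases fin2_elem k with rfl | rfl
        · rw [hb'0]; exact misB1_GS
        · rw [hb'1]; exact hbi'
      have hugs : IsGS bi' := hbi'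
      have hmono : ∀ S, bi' S ≤ bi' Finset.univ := fun S => hugs.1.2.1 S _ (Finset.subset_univ S)
      have hmono' : ∀ S, Function.update (![misB1, misB2] : Fin 2 → Finset (Fin 2) → ℝ) 1 bi' 1 S
          ≤ bi' Finset.univ := by rw [hb'1]; exact hmono
      have hb0le : ∀ S, Function.update (![misB1, misB2] : Fin 2 → Finset (Fin 2) → ℝ) 1 bi' 0 S
          ≤ 1 := by rw [hb'0]; exact misB1_le_one
      have hpay' := hEng.2 _ hb' 1
      -- payment of agent 1 at the bid profile is ≤ 0
      have hpay1 : M.pay ![misB1, misB2] 1 ≤ 0 := by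
        have hp := hEng.2 _ hbb 1
        rw [halloc1, Finset.sum_singleton] at hp
        have := price0_le_of_misB1 (![misB1, misB2]) rfl misB2_GS
        rw [hp]; linarith
      simp only [util, hv1]
      rw [halloc1, hpay']
      have hval1 : unitDemand ![1, 2 - ε] {0} = 1 := by rw [unitDemand_single, hw20]
      rw [hval1]
      by_cases h1A : (1 : Fin 2) ∈ M.alloc (Function.update (![misB1, misB2] :
          Fin 2 → Finset (Fin 2) → ℝ) 1 bi') 1
      · have hge := price1_ge_of_misB1 M hdisj hEng _ hb' hb'0 h1A
        have hp0 : Wmult (Function.update (![misB1, misB2] : Fin 2 → Finset (Fin 2) → ℝ) 1 bi')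
            (fun _ => 1) ≤ Wmult (Function.update (![misB1, misB2] :
            Fin 2 → Finset (Fin 2) → ℝ) 1 bi') (fun k => if k = (0:Fin 2) then 2 else 1) := by
          refine Wmult_mono _ _ _ (fun j => by split <;> norm_num)
            (Wmult_bdd _ _ 1 (bi' Finset.univ) hb0le hmono')
        have hnn : ∀ j ∈ M.alloc (Function.update (![misB1, misB2] :
            Fin 2 → Finset (Fin 2) → ℝ) 1 bi') 1,
            0 ≤ Wmult (Function.update (![misB1, misB2] : Fin 2 → Finset (Fin 2) → ℝ) 1 bi')
              (fun k => if k = j then 2 else 1) -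
            Wmult (Function.update (![misB1, misB2] : Fin 2 → Finset (Fin 2) → ℝ) 1 bi')
              (fun _ => 1) := by
          intro j _
          rcases fin2_elem j with rfl | rfl
          · linarith
          · linarith
        have hsingle := Finset.single_le_sum hnn h1A
        have hvle := hv1le (M.alloc (Function.update (![misB1, misB2] :
            Fin 2 → Finset (Fin 2) → ℝ) 1 bi') 1)
        linarith
      · have hpge := hpn _ hb' 1
        rw [hpay'] at hpge
        have hvle : unitDemand ![1, 2 - ε] (M.alloc (Function.update (![misB1, misB2] :
            Fin 2 → Finset (Fin 2) → ℝ) 1 bi') 1) ≤ 1 := by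
          rcases fin2_cases (M.alloc (Function.update (![misB1, misB2] :
              Fin 2 → Finset (Fin 2) → ℝ) 1 bi') 1) with h | h | h | h
          · rw [h, unitDemand_empty]; norm_num
          · rw [h, unitDemand_single, hw20]
          · rw [h] at h1A; exact absurd (by decide) h1A
          · rw [h] at h1A; exact absurd (by decide) h1A
        linarith
  · -- non-exposure
    intro i
    rcases fin2_elem i with rfl | rfl
    · intro b hb hbi
      have hb0 : b 0 = misB1 := hbi
      have hu : IsGS (b 1) := hb 1
      have hp := hEng.2 _ hb 0
      have hq0 := price0_le_of_misB1 b hb0 hu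
      have hq1 := price1_le_of_misB1 b hb0 hu
      rw [hp, hv0]
      rcases fin2_cases (M.alloc b 0) with h | h | h | h <;> rw [h]
      · rw [Finset.sum_empty, unitDemand_empty]; norm_num
      · rw [Finset.sum_singleton, unitDemand_single, hw10]; linarith
      · rw [Finset.sum_singleton, unitDemand_single, hw11]; linarith
      · rw [sum_pair2, unitDemand_pair, hw10, hw11]
        have := le_max_right (2 - ε) (1:ℝ)
        linarith
    · intro b hb hbi
      have hb1 : b 1 = misB2 := hbi
      have hu : IsGS (b 0) := hb 0
      have hp := hEng.2 _ hb 1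
      have hq1 := price1_le_of_misB2 b hb1 hu
      have hq0 := price0_le_of_misB2 b hb1 hu
      rw [hp, hv1]
      rcases fin2_cases (M.alloc b 1) with h | h | h | h <;> rw [h]
      · rw [Finset.sum_empty, unitDemand_empty]; norm_num
      · rw [Finset.sum_singleton, unitDemand_single, hw20]; linarith
      · rw [Finset.sum_singleton, unitDemand_single, hw21]; linarith
      · rw [sum_pair2, unitDemand_pair, hw20, hw21]
        have := le_max_left (1:ℝ) (2 - ε)
        linarith
  · -- welfare at the equilibrium
    rw [Fin.sum_univ_two, hv0, hv1, halloc0, halloc1, unitDemand_single, unitDemand_single,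
      hw11, hw20]
    norm_num
  · -- OPT
    rw [OPT]
    apply le_antisymm
    · apply W_le
      intro X _
      rw [hv0, hv1]
      have := hv0le (X 0)
      have := hv1le (X 1)
      linarith
    · refine le_W _ _ (![{0}, {1}]) ?_ ?_ (W_bdd _ (2 - ε) (2 - ε) hv0le hv1le)
      · intro i j hij
        rcases fin2_elem i with rfl | rfl <;> rcases fin2_elem j with rfl | rfl <;>
          first
            | exact absurd rfl hij
            | (simp only [Matrix.cons_val_zero, Matrix.cons_val_one, Matrix.head_cons]; decide)
      · simp only [Matrix.cons_val_zero, Matrix.cons_val_one, Matrix.head_cons, hv0, hv1]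
        rw [unitDemand_single, unitDemand_single, hw10, hw21]
        ring
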